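/- Let P be a primary Puiseux monoid (generated by positive rationals whose denominators are pairwise distinct primes) such that 0 is not a limit point of P. Then ρ_k(P) < ∞ for every k ∈ ℕ. -/
import Mathlib


/-- A Puiseux monoid: an additive submonoid of ℚ consisting of nonnegative rationals. -/
def PM.Puiseux (P : AddSubmonoid ℚ) : Prop := ∀ x ∈ P, 0 ≤ x

/-- `a` is an atom of `P`. -/
def PM.IsAtom (P : AddSubmonoid ℚ) (a : ℚ) : Prop :=
  a ∈ P ∧ a ≠ 0 ∧ ∀ x ∈ P, ∀ y ∈ P, a = x + y → x = 0 ∨ y = 0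

/-- A factorization of `x` is a multiset of atoms of `P` summing to `x`. -/
def PM.IsFactorization (P : AddSubmonoid ℚ) (x : ℚ) (z : Multiset ℚ) : Prop :=
  (∀ a ∈ z, PM.IsAtom P a) ∧ z.sum = x

/-- The set of lengths of `x`. -/
def PM.Lengths (P : AddSubmonoid ℚ) (x : ℚ) : Set ℕ :=
  {n | ∃ z : Multiset ℚ, PM.IsFactorization P x z ∧ Multiset.card z = n}

/-- `P` is atomic: it is generated by its set of atoms. -/
def PM.Atomic (P : AddSubmonoid ℚ) : Prop :=
  AddSubmonoid.closure {a | PM.IsAtom P a} = P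

/-- The union of sets of lengths `U_k(P)`. -/
def PM.U (P : AddSubmonoid ℚ) (k : ℕ) : Set ℕ :=
  {l | ∃ x ∈ P, k ∈ PM.Lengths P x ∧ l ∈ PM.Lengths P x}

/-- `P` is a primary Puiseux monoid. -/
def PM.Primary (P : AddSubmonoid ℚ) : Prop :=
  ∃ A : Set ℚ, (∀ a ∈ A, 0 < a) ∧ AddSubmonoid.closure A = P ∧
    (∀ a ∈ A, (a.den).Prime) ∧
    ∀ a ∈ A, ∀ b ∈ A, a ≠ b → a.den ≠ b.den

/-- If no element's denominator is divisible by the prime `p`, neither is the sum's. -/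
lemma PM.sum_den_coprime {p : ℕ} (hp : p.Prime) :
    ∀ (s : Multiset ℚ), (∀ b ∈ s, ¬ p ∣ b.den) → ¬ p ∣ s.sum.den := by
  intro s
  induction s using Multiset.induction with
  | empty =>
    intro _ h
    rw [Multiset.sum_zero] at h
    simp only [Rat.den_ofNat] at h
    exact hp.ne_one (Nat.dvd_one.mp h)
  | cons a t ih =>
    intro h hdvd
    rw [Multiset.sum_cons] at hdvd
    have h2 : p ∣ a.den * t.sum.den := dvd_trans hdvd (Rat.add_den_dvd a t.sum)
    rcases hp.dvd_mul.1 h2 with h3 | h3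
    · exact h a (Multiset.mem_cons_self a t) h3
    · exact ih (fun b hb => h b (Multiset.mem_cons_of_mem hb)) h3

/-- Key congruence: for two factorizations of the same element, the multiplicities of an
atom `a` agree modulo the (prime) denominator of `a`. -/
lemma PM.key_dvd (P : AddSubmonoid ℚ)
    (hden : ∀ a, PM.IsAtom P a → a.den.Prime)
    (hinj : ∀ a b, PM.IsAtom P a → PM.IsAtom P b → a.den = b.den → a = b)
    {z z' : Multiset ℚ} (hz : ∀ b ∈ z, PM.IsAtom P b) (hz' : ∀ b ∈ z', PM.IsAtom P b)
    (hsum : z.sum = z'.sum) {a : ℚ} (ha : PM.IsAtom P a) :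
    ((a.den : ℤ)) ∣ (z.count a : ℤ) - (z'.count a : ℤ) := by
  set p : ℕ := a.den with hpdef
  have hp : p.Prime := hden a ha
  have hdec : ∀ (u : Multiset ℚ), (∀ b ∈ u, PM.IsAtom P b) →
      u.sum = (u.count a : ℚ) * a + (u.filter (fun b => ¬ b = a)).sum ∧
      ¬ p ∣ (u.filter (fun b => ¬ b = a)).sum.den := by
    intro u hu
    constructor
    · conv_lhs => rw [← Multiset.filter_add_not (fun b => b = a) u]
      rw [Multiset.sum_add, Multiset.filter_eq', Multiset.sum_replicate, nsmul_eq_mul]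
    · apply PM.sum_den_coprime hp
      intro b hb
      rw [Multiset.mem_filter] at hb
      obtain ⟨hbu, hbne⟩ := hb
      intro hdvd
      have hbp : b.den.Prime := hden b (hu b hbu)
      have : p = b.den := (Nat.prime_dvd_prime_iff_eq hp hbp).1 hdvd
      exact hbne (hinj b a (hu b hbu) ha this.symm)
  obtain ⟨hzdec, hzden⟩ := hdec z hz
  obtain ⟨hz'dec, hz'den⟩ := hdec z' hz'
  set w : ℚ := (z.filter (fun b => ¬ b = a)).sum with hw
  set w' : ℚ := (z'.filter (fun b => ¬ b = a)).sum with hw'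
  set e : ℤ := (z.count a : ℤ) - (z'.count a : ℤ) with he
  have heq : (z.count a : ℚ) * a + w = (z'.count a : ℚ) * a + w' := by
    rw [← hzdec, ← hz'dec, hsum]
  have hy : ((e : ℤ) : ℚ) * a = w' - w := by
    push_cast [he]
    nlinarith [heq]
  -- denominator of w' - w is coprime to p
  have hyden : ¬ p ∣ (w' - w).den := by
    intro hdvd
    have hsub : (w' - w).den ∣ w'.den * (-w).den := by
      rw [sub_eq_add_neg]
      exact Rat.add_den_dvd w' (-w)
    rw [Rat.neg_den] at hsub
    rcases hp.dvd_mul.1 (dvd_trans hdvd hsub) with h3 | h3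
    · exact hz'den h3
    · exact hzden h3
  have hpQ : ((p : ℤ) : ℚ) ≠ 0 := by
    exact_mod_cast (Nat.cast_ne_zero (R := ℤ)).mpr hp.ne_zero
  have hnum : ((e * a.num : ℤ) : ℚ) = (w' - w) * ((p : ℤ) : ℚ) := by
    push_cast
    calc ((e : ℤ) : ℚ) * (a.num : ℚ) = ((e : ℤ) : ℚ) * (a * (a.den : ℚ)) := by
          rw [Rat.mul_den_eq_num]
      _ = (((e : ℤ) : ℚ) * a) * ((p : ℕ) : ℚ) := by rw [hpdef]; ring
      _ = (w' - w) * ((p : ℕ) : ℚ) := by rw [hy]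
  have hyint : (w' - w).den = 1 := by
    have hrepr : (w' - w) = ((e * a.num : ℤ) : ℚ) / (((p : ℕ) : ℤ) : ℚ) := by
      rw [hnum]
      field_simp
    have hdvd : ((w' - w).den : ℤ) ∣ ((p : ℕ) : ℤ) := by
      rw [hrepr, ← Rat.divInt_eq_div]
      exact Rat.den_dvd _ _
    have hdvdn : (w' - w).den ∣ p := by exact_mod_cast hdvd
    rcases hp.eq_one_or_self_of_dvd _ hdvdn with h | h
    · exact h
    · exact absurd (h ▸ dvd_refl p) hyden
  have hyeq : (((w' - w).num : ℤ) : ℚ) = w' - w := by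
    conv_rhs => rw [← Rat.num_div_den (w' - w), hyint]
    simp
  have h5 : e * a.num = (w' - w).num * (p : ℤ) := by
    have : ((e * a.num : ℤ) : ℚ) = (((w' - w).num * (p : ℤ) : ℤ) : ℚ) := by
      rw [hnum]
      push_cast
      rw [hyeq]
    exact_mod_cast this
  have hpInt : Prime ((p : ℕ) : ℤ) := Nat.prime_iff_prime_int.mp hp
  have hpdvd : ((p : ℕ) : ℤ) ∣ e * a.num := ⟨(w' - w).num, by rw [h5]; ring⟩
  rcases hpInt.dvd_mul.mp hpdvd with h6 | h6
  · exact h6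
  · exfalso
    have h7 : p ∣ a.num.natAbs := Int.natCast_dvd.mp h6
    have h8 : p ∣ Nat.gcd a.num.natAbs a.den := Nat.dvd_gcd h7 (hpdef ▸ dvd_refl p)
    rw [a.reduced] at h8
    exact hp.ne_one (Nat.dvd_one.mp h8)

theorem stmt13 (P : AddSubmonoid ℚ) (hprim : PM.Primary P)
    (h0 : ∃ q : ℚ, 0 < q ∧ ∀ x ∈ P, x ≠ 0 → q ≤ x) :
    ∀ k : ℕ, (PM.U P k).Finite := by
  obtain ⟨A, hApos, hAcl, hAden, hAinj⟩ := hprim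
  obtain ⟨q, hq, hqle⟩ := h0
  -- every atom belongs to A
  have hatomA : ∀ a, PM.IsAtom P a → a ∈ A := by
    intro a ha
    obtain ⟨haP, hane, hsplit⟩ := ha
    rw [← hAcl] at haP
    obtain ⟨s, hsA, hssum⟩ := AddSubmonoid.exists_multiset_of_mem_closure haP
    rcases eq_or_ne s 0 with rfl | hs0
    · rw [Multiset.sum_zero] at hssum
      exact absurd hssum.symm hane
    · obtain ⟨b, hb⟩ := Multiset.exists_mem_of_ne_zero hs0
      have hsdec : s = b ::ₘ s.erase b := (Multiset.cons_erase hb).symm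
      have hbA := hsA b hb
      have hbP : b ∈ P := hAcl ▸ AddSubmonoid.subset_closure hbA
      have htP : (s.erase b).sum ∈ P := by
        rw [← hAcl]
        exact multiset_sum_mem _ (fun c hc =>
          AddSubmonoid.subset_closure (hsA c (Multiset.mem_of_mem_erase hc)))
      have hcases := hsplit b hbP _ htP (by rw [← hssum]; conv_lhs => rw [hsdec, Multiset.sum_cons])
      rcases hcases with h | h
      · exact absurd h (ne_of_gt (hApos b hbA))
      · have herase : s.erase b = 0 := by
          by_contra hne0
          obtain ⟨c, hc⟩ := Multiset.exists_mem_of_ne_zero hne0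
          have hcpos : 0 < c := hApos c (hsA c (Multiset.mem_of_mem_erase hc))
          have hle : c ≤ (s.erase b).sum :=
            Multiset.single_le_sum
              (fun d hd => le_of_lt (hApos d (hsA d (Multiset.mem_of_mem_erase hd)))) c hc
          rw [h] at hle
          linarith
        have hab : a = b := by
          rw [← hssum, hsdec, herase, Multiset.sum_cons, Multiset.sum_zero, add_zero]
        rw [hab]; exact hbA
  have hden : ∀ a, PM.IsAtom P a → a.den.Prime := fun a ha => hAden a (hatomA a ha)
  have hinj : ∀ a b, PM.IsAtom P a → PM.IsAtom P b → a.den = b.den → a = b := by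
    intro a b ha hb hd
    by_contra hne
    exact hAinj a (hatomA a ha) b (hatomA b hb) hne hd
  have hqatom : ∀ a, PM.IsAtom P a → q ≤ a := fun a ha => hqle a ha.1 ha.2.1
  intro k
  -- bound on "small" atoms
  have hfin : {a : ℚ | PM.IsAtom P a ∧ a.den ≤ k}.Finite := by
    apply Set.Finite.of_finite_image (f := Rat.den)
    · apply (Set.finite_Iic k).subset
      rintro n ⟨a, ⟨_, h⟩, rfl⟩
      exact h
    · rintro a ⟨ha, _⟩ b ⟨hb, _⟩ hab
      exact hinj a b ha hb hab
  obtain ⟨B, hB⟩ := hfin.bddAbove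
  set M : ℚ := max B 0 with hM
  have hM0 : 0 ≤ M := le_max_right _ _
  have hMb : ∀ a, PM.IsAtom P a → a.den ≤ k → a ≤ M :=
    fun a ha hak => le_trans (hB ⟨ha, hak⟩) (le_max_left _ _)
  set C : ℚ := (k : ℚ) + (k : ℚ) * M / q + (k : ℚ) * M / q with hC
  apply Set.Finite.subset (Set.finite_Iic (⌈C⌉₊ : ℕ))
  intro l hl
  obtain ⟨x, hxP, ⟨z, ⟨hza, hzs⟩, hzc⟩, ⟨z', ⟨hz'a, hz's⟩, hz'c⟩⟩ := hl
  have hsum : z.sum = z'.sum := by rw [hzs, hz's]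
  -- counts of big atoms in z' dominate those in z
  have hcount : ∀ a : ℚ, k < a.den → z.count a ≤ z'.count a := by
    intro a hk
    by_cases hmem : a ∈ z
    · have ha := hza a hmem
      have hd := PM.key_dvd P hden hinj hza hz'a hsum ha
      by_contra hlt
      push_neg at hlt
      have h1 : z.count a ≤ k := hzc ▸ Multiset.count_le_card a z
      have h2 : (a.den : ℤ) ≤ (z.count a : ℤ) - (z'.count a : ℤ) :=
        Int.le_of_dvd (by omega) hd
      omega
    · simp [Multiset.count_eq_zero_of_notMem hmem]
  classical
  set big : ℚ → Prop := fun b => k < b.den with hbig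
  have hle : z.filter big ≤ z'.filter big := by
    rw [Multiset.le_iff_count]
    intro a
    rw [Multiset.count_filter, Multiset.count_filter]
    split_ifs with h
    · exact hcount a h
    · exact le_refl 0
  set d : Multiset ℚ := z'.filter big - z.filter big with hd
  have hdadd : z.filter big + d = z'.filter big := add_tsub_cancel_of_le hle
  have hzsplit : (z.filter big).sum + (z.filter (fun b => ¬ big b)).sum = z.sum := by
    rw [← Multiset.sum_add, Multiset.filter_add_not]
  have hz'split : (z'.filter big).sum + (z'.filter (fun b => ¬ big b)).sum = z'.sum := by
    rw [← Multiset.sum_add, Multiset.filter_add_not]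
  have hdsum : (z'.filter big).sum = (z.filter big).sum + d.sum := by
    rw [← hdadd, Multiset.sum_add]
  have hkey : (z.filter (fun b => ¬ big b)).sum
      = d.sum + (z'.filter (fun b => ¬ big b)).sum := by
    have := hzsplit.trans (hsum.trans hz'split.symm)
    rw [hdsum] at this
    linarith
  -- element bounds
  have hdq : ∀ b ∈ d, q ≤ b := by
    intro b hb
    have : b ∈ z' := Multiset.mem_of_le (le_trans (tsub_le_self) (Multiset.filter_le _ _)) hb
    exact hqatom b (hz'a b this)
  have hz'sq : ∀ b ∈ z'.filter (fun b => ¬ big b), q ≤ b := by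
    intro b hb
    exact hqatom b (hz'a b (Multiset.mem_of_le (Multiset.filter_le _ _) hb))
  have hzsM : ∀ b ∈ z.filter (fun b => ¬ big b), b ≤ M := by
    intro b hb
    rw [Multiset.mem_filter] at hb
    exact hMb b (hza b hb.1) (by have := hb.2; simp only [hbig] at this; omega)
  -- sum bounds
  have hd1 : (Multiset.card d : ℚ) * q ≤ d.sum := by
    have := Multiset.card_nsmul_le_sum hdq
    rwa [nsmul_eq_mul] at this
  have hz's1 : (Multiset.card (z'.filter (fun b => ¬ big b)) : ℚ) * q
      ≤ (z'.filter (fun b => ¬ big b)).sum := by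
    have := Multiset.card_nsmul_le_sum hz'sq
    rwa [nsmul_eq_mul] at this
  have hzs1 : (z.filter (fun b => ¬ big b)).sum
      ≤ (Multiset.card (z.filter (fun b => ¬ big b)) : ℚ) * M := by
    have := Multiset.sum_le_card_nsmul _ _ hzsM
    rwa [nsmul_eq_mul] at this
  have hcardzs : (Multiset.card (z.filter (fun b => ¬ big b)) : ℚ) ≤ (k : ℚ) := by
    have : Multiset.card (z.filter (fun b => ¬ big b)) ≤ Multiset.card z :=
      Multiset.card_le_card (Multiset.filter_le _ _)
    rw [hzc] at this
    exact_mod_cast this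
  have hzsk : (z.filter (fun b => ¬ big b)).sum ≤ (k : ℚ) * M :=
    le_trans hzs1 (mul_le_mul_of_nonneg_right hcardzs hM0)
  have hdnn : (0 : ℚ) ≤ d.sum :=
    le_trans (by positivity) hd1
  have hz'snn : (0 : ℚ) ≤ (z'.filter (fun b => ¬ big b)).sum :=
    le_trans (by positivity) hz's1
  have hdle : (Multiset.card d : ℚ) ≤ (k : ℚ) * M / q := by
    rw [le_div_iff₀ hq]
    linarith
  have hz'sle : (Multiset.card (z'.filter (fun b => ¬ big b)) : ℚ) ≤ (k : ℚ) * M / q := by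
    rw [le_div_iff₀ hq]
    linarith
  -- cardinality accounting
  have hcards : Multiset.card z' =
      Multiset.card (z.filter big) + Multiset.card d
        + Multiset.card (z'.filter (fun b => ¬ big b)) := by
    have h1 : Multiset.card (z'.filter big) + Multiset.card (z'.filter (fun b => ¬ big b))
        = Multiset.card z' := by
      rw [← Multiset.card_add, Multiset.filter_add_not]
    have h2 : Multiset.card (z.filter big) + Multiset.card d
        = Multiset.card (z'.filter big) := by
      rw [← Multiset.card_add, hdadd]
    omega
  have hcardzb : Multiset.card (z.filter big) ≤ k := by
    have : Multiset.card (z.filter big) ≤ Multiset.card z :=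
      Multiset.card_le_card (Multiset.filter_le _ _)
    omega
  have hlC : (l : ℚ) ≤ C := by
    rw [← hz'c, hcards, hC]
    push_cast
    have hzb : (Multiset.card (z.filter big) : ℚ) ≤ (k : ℚ) := by exact_mod_cast hcardzb
    linarith
  have : l ≤ ⌈C⌉₊ := by
    calc l = ⌈(l : ℚ)⌉₊ := (Nat.ceil_natCast l).symm
      _ ≤ ⌈C⌉₊ := Nat.ceil_le_ceil hlC
  exact this
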